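/- Work with a deterministic finite-horizon MDP: S is a finite type of states, 𝒜 is a finite type of actions, f : S → 𝒜 → S is a deterministic transition function, r : S → 𝒜 → ℝ is a reward function, T ⊆ S is a set of terminal states, and there is a height function h : S → ℕ with h(s) = 0 if and only if s ∈ T and h(f(s,a)) < h(s) for every non-terminal s and every action a. Let β > 0 and let π_ref be a policy with π_ref(a|s) > 0 for all s, a. Let ν_S : S → ℝ satisfy ν_S(s) > 0 for every non-terminal s, and for each non-terminal s let ν_A(·|s) be a probability mass function on 𝒜 with ν_A(a|s) > 0 for all a. Suppose the policy π⁺, with π⁺(a|s) > 0 for all s, a, minimizes L(π) = (1/2)·∑_{s non-terminal} ν_S(s)·∑_a ν_A(a|s)·(A^{π_ref}(s,a)/β − log(π(a|s)/π_ref(a|s)))² over all policies π with π(a|s) > 0 for all s, a. Then for every initial distribution μ on S, V^{π⁺}(μ) ≥ V^{π_ref}(μ). -/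

import Mathlib

lemma kl_nonneg {𝒜 : Type*} [Fintype 𝒜] (p q : 𝒜 → ℝ)
    (hp : ∀ a, 0 < p a) (hq : ∀ a, 0 < q a) (hs : ∑ a, p a = ∑ a, q a) :
    0 ≤ ∑ a, p a * Real.log (p a / q a) := by
  have key : ∑ a, p a * Real.log (q a / p a) ≤ 0 := by
    calc ∑ a, p a * Real.log (q a / p a)
        ≤ ∑ a, p a * (q a / p a - 1) := by
          apply Finset.sum_le_sum
          intro a _
          exact mul_le_mul_of_nonneg_left
            (Real.log_le_sub_one_of_pos (div_pos (hq a) (hp a))) (hp a).le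
      _ = ∑ a, (q a - p a) := by
          apply Finset.sum_congr rfl; intro a _
          field_simp [(hp a).ne']
      _ = 0 := by rw [Finset.sum_sub_distrib, hs, sub_self]
  have h2 : ∑ a, p a * Real.log (p a / q a) = -∑ a, p a * Real.log (q a / p a) := by
    rw [← Finset.sum_neg_distrib]
    apply Finset.sum_congr rfl; intro a _
    rw [Real.log_div (hp a).ne' (hq a).ne', Real.log_div (hq a).ne' (hp a).ne']
    ring
  rw [h2]; linarith


lemma deriv_nonneg_of_right_min (φ : ℝ → ℝ) (D : ℝ) (hD : HasDerivAt φ D 0)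
    (hmin : ∀ t ∈ Set.Icc (0:ℝ) 1, φ 0 ≤ φ t) : 0 ≤ D := by
  have hslope : Filter.Tendsto (slope φ 0) (nhdsWithin 0 {0}ᶜ) (nhds D) :=
    hasDerivAt_iff_tendsto_slope.mp hD
  have hslope' : Filter.Tendsto (slope φ 0) (nhdsWithin 0 (Set.Ioi 0)) (nhds D) :=
    hslope.mono_left (nhdsWithin_mono 0 (fun x hx => ne_of_gt hx))
  refine ge_of_tendsto hslope' ?_
  filter_upwards [Ico_mem_nhdsGT_of_mem (by norm_num : (0:ℝ) ∈ Set.Ico 0 1),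
    self_mem_nhdsWithin] with t ht ht'
  have ht0 : (0:ℝ) < t := ht'
  have hle : φ 0 ≤ φ t := hmin t ⟨le_of_lt ht0, le_of_lt ht.2⟩
  have h2 : slope φ 0 t = (φ t - φ 0) / t := by simp [slope_def_field]
  rw [h2]
  have h3 : 0 ≤ φ t - φ 0 := by linarith
  positivity

lemma keystep {𝒜 : Type*} [Fintype 𝒜] (c πref νA p : 𝒜 → ℝ)
    (hrefpos : ∀ a, 0 < πref a) (hrefsum : ∑ a, πref a = 1)
    (hνA : ∀ a, 0 < νA a)
    (hppos : ∀ a, 0 < p a) (hpsum : ∑ a, p a = 1)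
    (hc : ∑ a, πref a * c a = 0)
    (hopt : ∀ q : 𝒜 → ℝ, (∀ a, 0 < q a) → (∑ a, q a = 1) →
      ∑ a, νA a * (c a - Real.log (p a / πref a)) ^ 2 ≤
        ∑ a, νA a * (c a - Real.log (q a / πref a)) ^ 2) :
    0 ≤ ∑ a, p a * (c a - Real.log (p a / πref a)) := by
  classical
  have hne : Nonempty 𝒜 := by
    by_contra hE
    rw [not_nonempty_iff] at hE
    simp [Finset.univ_eq_empty] at hpsum
  set x : 𝒜 → ℝ := fun a => Real.log (p a / πref a) with hx
  set w : 𝒜 → ℝ := fun a => νA a * (c a - x a) / p a with hw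
  set m : ℝ := ∑ a, p a * w a with hm
  -- Step 1: first-order condition gives w a0 ≤ m for every a0
  have w_le : ∀ a0, w a0 ≤ m := by
    intro a0
    set d : 𝒜 → ℝ := fun a => (1/2) * ((if a = a0 then (1:ℝ) else 0) - p a) with hd
    set φ : ℝ → ℝ := fun t => ∑ a, νA a * (c a - Real.log ((p a + t * d a) / πref a)) ^ 2 with hφ
    have hqpos : ∀ t ∈ Set.Icc (0:ℝ) 1, ∀ a, 0 < p a + t * d a := by
      intro t ht a
      have h1 : p a + t * d a = (1 - t/2) * p a + (t/2) * (if a = a0 then (1:ℝ) else 0) := by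
        simp only [hd]; ring
      rw [h1]
      have ht2 : t/2 ≤ 1/2 := by linarith [ht.2]
      have h3 : 0 < (1 - t/2) * p a := by
        apply mul_pos _ (hppos a); linarith
      have h4 : 0 ≤ (t/2) * (if a = a0 then (1:ℝ) else 0) := by
        apply mul_nonneg (by linarith [ht.1]); split <;> norm_num
      linarith
    have hqsum : ∀ t : ℝ, ∑ a, (p a + t * d a) = 1 := by
      intro t
      have h5 : ∑ a, (p a + t * d a)
          = ∑ a, p a + t * ((1/2) * ((∑ a, (if a = a0 then (1:ℝ) else 0)) - ∑ a, p a)) := by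
        rw [Finset.sum_add_distrib, ← Finset.mul_sum]
        congr 1
        rw [← Finset.mul_sum, Finset.sum_sub_distrib]
      rw [h5, hpsum, Finset.sum_ite_eq' Finset.univ a0]
      simp
    have hminφ : ∀ t ∈ Set.Icc (0:ℝ) 1, φ 0 ≤ φ t := by
      intro t ht
      have := hopt (fun a => p a + t * d a) (hqpos t ht) (hqsum t)
      have h0 : φ 0 = ∑ a, νA a * (c a - Real.log (p a / πref a)) ^ 2 := by
        simp [hφ]
      rw [h0]; exact this
    have hDa : ∀ a, HasDerivAt (fun t => νA a * (c a - Real.log ((p a + t * d a) / πref a)) ^ 2)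
        (-(2 * νA a * (c a - x a) * (d a / p a))) 0 := by
      intro a
      have h1 : HasDerivAt (fun t : ℝ => p a + t * d a) (d a) 0 := by
        simpa using ((hasDerivAt_id (0:ℝ)).mul_const (d a)).const_add (p a)
      have h2 := h1.div_const (πref a)
      have h0ne : (p a + 0 * d a) / πref a ≠ 0 := by
        have e0 : p a + 0 * d a = p a := by ring
        rw [e0]
        exact ne_of_gt (div_pos (hppos a) (hrefpos a))
      have h3 := h2.log h0ne
      have h4 := ((hasDerivAt_const (0:ℝ) (c a)).sub h3).pow 2
      have h5 := h4.const_mul (νA a)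
      convert h5 using 1
      · rfl
      · rfl
      · rfl
      have e1 : p a + 0 * d a = p a := by ring
      rw [e1]
      have e2 : d a / πref a / (p a / πref a) = d a / p a := by
        field_simp [(hrefpos a).ne', (hppos a).ne']
      rw [e2]
      simp only [hx]
      norm_num
      ring
    have hφD : HasDerivAt φ (∑ a, -(2 * νA a * (c a - x a) * (d a / p a))) 0 :=
      HasDerivAt.fun_sum (fun a _ => hDa a)
    have hD := deriv_nonneg_of_right_min φ _ hφD hminφ
    have hsum : ∑ a, -(2 * νA a * (c a - x a) * (d a / p a)) = -(w a0) + m := by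
      have hterm : ∀ a, -(2 * νA a * (c a - x a) * (d a / p a))
          = -(w a * (if a = a0 then (1:ℝ) else 0)) + w a * p a := by
        intro a
        simp only [hw, hd]
        by_cases ha : a = a0 <;> simp only [ha, if_pos, if_neg, ite_true, ite_false] <;>
          field_simp <;> ring
      rw [Finset.sum_congr rfl (fun a _ => hterm a), Finset.sum_add_distrib]
      congr 1
      · simp only [mul_ite, mul_one, mul_zero]
        rw [Finset.sum_neg_distrib, Finset.sum_ite_eq' Finset.univ a0 w,
          if_pos (Finset.mem_univ a0)]
      · rw [hm]
        exact Finset.sum_congr rfl (fun a _ => mul_comm (w a) (p a))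
    rw [hsum] at hD
    linarith
  -- Step 2: w a = m for all a
  have w_eq : ∀ a, w a = m := by
    intro a
    have hz : ∑ b, p b * (m - w b) = 0 := by
      rw [Finset.sum_congr rfl (fun b _ => mul_sub (p b) m (w b)), Finset.sum_sub_distrib,
        ← Finset.sum_mul, hpsum, one_mul, ← hm, sub_self]
    have hnn : ∀ b ∈ Finset.univ, 0 ≤ p b * (m - w b) := by
      intro b _
      exact mul_nonneg (hppos b).le (by linarith [w_le b])
    have := (Finset.sum_eq_zero_iff_of_nonneg hnn).mp hz a (Finset.mem_univ a)
    have := (mul_eq_zero.mp this).resolve_left (ne_of_gt (hppos a))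
    linarith
  -- relation c - x = m * p / νA
  have cx : ∀ a, c a - x a = m * p a / νA a := by
    intro a
    have hh := w_eq a
    simp only [hw] at hh
    rw [div_eq_iff (ne_of_gt (hppos a))] at hh
    rw [eq_div_iff (ne_of_gt (hνA a))]
    linear_combination hh
  -- Step 3: m ≥ 0
  have hm0 : 0 ≤ m := by
    by_contra hneg
    push_neg at hneg
    have hxc : ∀ a, c a < x a := by
      intro a
      have h1 : m * p a / νA a < 0 :=
        div_neg_of_neg_of_pos (mul_neg_of_neg_of_pos hneg (hppos a)) (hνA a)
      have := cx a
      linarith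
    have hpe : ∀ a, p a = πref a * Real.exp (x a) := by
      intro a
      rw [hx]
      rw [Real.exp_log (div_pos (hppos a) (hrefpos a)), mul_comm, div_mul_cancel₀]
      exact ne_of_gt (hrefpos a)
    have hlt : ∑ a, πref a * Real.exp (c a) < ∑ a, πref a * Real.exp (x a) := by
      apply Finset.sum_lt_sum_of_nonempty Finset.univ_nonempty
      intro a _
      exact mul_lt_mul_of_pos_left (Real.exp_lt_exp.mpr (hxc a)) (hrefpos a)
    have hge : (1:ℝ) ≤ ∑ a, πref a * Real.exp (c a) := by
      calc (1:ℝ) = ∑ a, πref a * (1 + c a) := by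
            rw [Finset.sum_congr rfl (fun a _ => mul_add (πref a) 1 (c a)),
              Finset.sum_add_distrib]
            simp [hrefsum, hc]
        _ ≤ ∑ a, πref a * Real.exp (c a) := by
            apply Finset.sum_le_sum
            intro a _
            apply mul_le_mul_of_nonneg_left _ (hrefpos a).le
            linarith [Real.add_one_le_exp (c a)]
    have hsum1 : ∑ a, πref a * Real.exp (x a) = 1 := by
      rw [← hpsum]
      exact Finset.sum_congr rfl (fun a _ => (hpe a).symm)
    rw [hsum1] at hlt
    linarith
  -- conclusion
  calc (0:ℝ) ≤ ∑ a, p a * (m * p a / νA a) := by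
        apply Finset.sum_nonneg
        intro a _
        exact mul_nonneg (hppos a).le
          (div_nonneg (mul_nonneg hm0 (hppos a).le) (hνA a).le)
    _ = ∑ a, p a * (c a - x a) := by
        exact Finset.sum_congr rfl (fun a _ => by rw [cx a])


/-- Unregularized value of a policy in a deterministic finite-horizon MDP,
defined by recursion on the height function `h`. -/
noncomputable def Vpol {S 𝒜 : Type*} [Fintype 𝒜] (f : S → 𝒜 → S) (r : S → 𝒜 → ℝ)
    (T : Set S) [DecidablePred (· ∈ T)] (h : S → ℕ)
    (hdec : ∀ s ∉ T, ∀ a, h (f s a) < h s)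
    (π : S → 𝒜 → ℝ) (s : S) : ℝ :=
  if s ∈ T then 0
  else ∑ a, π s a * (r s a + Vpol f r T h hdec π (f s a))
termination_by h s
decreasing_by exact hdec s (by assumption) _

/-- KL-regularized value (w.r.t. the reference policy `πref`) of a policy in a
deterministic finite-horizon MDP, defined by recursion on the height function `h`. -/
noncomputable def Vbeta {S 𝒜 : Type*} [Fintype 𝒜] (f : S → 𝒜 → S) (r : S → 𝒜 → ℝ)
    (T : Set S) [DecidablePred (· ∈ T)] (h : S → ℕ)
    (hdec : ∀ s ∉ T, ∀ a, h (f s a) < h s)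
    (β : ℝ) (πref π : S → 𝒜 → ℝ) (s : S) : ℝ :=
  if s ∈ T then 0
  else ∑ a, π s a *
    (r s a + Vbeta f r T h hdec β πref π (f s a) - β * Real.log (π s a / πref s a))
termination_by h s
decreasing_by exact hdec s (by assumption) _

/-- **Theorem 1 (monotonic improvement).** The solution of the exact DAPO
least-squares objective under exploratory state and action sampling distributions
also has unregularized value at least that of the reference policy. -/
theorem dapo_monotonic_improvement_unregularized {S 𝒜 : Type*} [Fintype S] [Fintype 𝒜]
    (f : S → 𝒜 → S) (r : S → 𝒜 → ℝ)
    (T : Set S) [DecidablePred (· ∈ T)] (h : S → ℕ)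
    (hT : ∀ s, h s = 0 ↔ s ∈ T)
    (hdec : ∀ s ∉ T, ∀ a, h (f s a) < h s)
    (β : ℝ) (hβ : 0 < β)
    (πref : S → 𝒜 → ℝ)
    (hrefpos : ∀ s a, 0 < πref s a) (hrefsum : ∀ s, ∑ a, πref s a = 1)
    (νS : S → ℝ) (hνS : ∀ s ∉ T, 0 < νS s)
    (νA : S → 𝒜 → ℝ)
    (hνApos : ∀ s ∉ T, ∀ a, 0 < νA s a) (hνAsum : ∀ s ∉ T, ∑ a, νA s a = 1)
    (πplus : S → 𝒜 → ℝ)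
    (hpluspos : ∀ s a, 0 < πplus s a) (hplussum : ∀ s, ∑ a, πplus s a = 1)
    (hmin : ∀ π : S → 𝒜 → ℝ, (∀ s a, 0 < π s a) → (∀ s, ∑ a, π s a = 1) →
      (1 / 2) * ∑ s ∈ Finset.univ.filter (fun s => s ∉ T), νS s *
          ∑ a, νA s a *
            ((r s a + Vpol f r T h hdec πref (f s a) - Vpol f r T h hdec πref s) / β
              - Real.log (πplus s a / πref s a)) ^ 2 ≤
        (1 / 2) * ∑ s ∈ Finset.univ.filter (fun s => s ∉ T), νS s *
          ∑ a, νA s a *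
            ((r s a + Vpol f r T h hdec πref (f s a) - Vpol f r T h hdec πref s) / β
              - Real.log (π s a / πref s a)) ^ 2) :
    ∀ μ : S → ℝ, (∀ s, 0 ≤ μ s) → ∑ s, μ s = 1 →
      ∑ s, μ s * Vpol f r T h hdec πref s ≤
        ∑ s, μ s * Vpol f r T h hdec πplus s := by

  intro μ hμ hμ1
  have keyineq : ∀ s0 ∉ T, Vpol f r T h hdec πref s0 ≤
      ∑ a, πplus s0 a * (r s0 a + Vpol f r T h hdec πref (f s0 a)
        - β * Real.log (πplus s0 a / πref s0 a)) := by
    intro s0 hs0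
    classical
    set Vref : S → ℝ := Vpol f r T h hdec πref with hVref
    set c : 𝒜 → ℝ := fun a => (r s0 a + Vref (f s0 a) - Vref s0) / β with hcdef
    have hV0 : Vref s0 = ∑ a, πref s0 a * (r s0 a + Vref (f s0 a)) := by
      rw [hVref]
      conv_lhs => rw [Vpol]
      rw [if_neg hs0]
    have hc : ∑ a, πref s0 a * c a = 0 := by
      have e : ∀ a, πref s0 a * c a
          = (πref s0 a * (r s0 a + Vref (f s0 a)) - πref s0 a * Vref s0) / β := by
        intro a
        simp only [hcdef]
        field_simp
      rw [Finset.sum_congr rfl (fun a _ => e a), ← Finset.sum_div,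
        Finset.sum_sub_distrib, ← Finset.sum_mul, hrefsum, one_mul, ← hV0, sub_self, zero_div]
    have hopt : ∀ q : 𝒜 → ℝ, (∀ a, 0 < q a) → (∑ a, q a = 1) →
        ∑ a, νA s0 a * (c a - Real.log (πplus s0 a / πref s0 a)) ^ 2 ≤
          ∑ a, νA s0 a * (c a - Real.log (q a / πref s0 a)) ^ 2 := by
      intro q hqpos hqsum
      set π : S → 𝒜 → ℝ := fun s a => if s = s0 then q a else πplus s a with hπ
      have hπpos : ∀ s a, 0 < π s a := by
        intro s a; simp only [hπ]; split
        · exact hqpos a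
        · exact hpluspos s a
      have hπsum : ∀ s, ∑ a, π s a = 1 := by
        intro s; by_cases hs : s = s0 <;> simp [hπ, hs, hqsum, hplussum s]
      have H := hmin π hπpos hπsum
      set filt := Finset.univ.filter (fun s => s ∉ T) with hfilt
      have hs0mem : s0 ∈ filt := Finset.mem_filter.mpr ⟨Finset.mem_univ s0, hs0⟩
      set F : S → ℝ := fun s => νS s * ∑ a, νA s a *
        ((r s a + Vref (f s a) - Vref s) / β - Real.log (πplus s a / πref s a)) ^ 2 with hF
      set G : S → ℝ := fun s => νS s * ∑ a, νA s a *
        ((r s a + Vref (f s a) - Vref s) / β - Real.log (π s a / πref s a)) ^ 2 with hG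
      have H' : ∑ s ∈ filt, F s ≤ ∑ s ∈ filt, G s := by
        have h2 := mul_le_mul_of_nonneg_left H (by norm_num : (0:ℝ) ≤ 2)
        calc ∑ s ∈ filt, F s
            = 2 * ((1 / 2) * ∑ s ∈ filt, νS s * ∑ a, νA s a *
              ((r s a + Vref (f s a) - Vref s) / β
                - Real.log (πplus s a / πref s a)) ^ 2) := by ring
          _ ≤ 2 * ((1 / 2) * ∑ s ∈ filt, νS s * ∑ a, νA s a *
              ((r s a + Vref (f s a) - Vref s) / β
                - Real.log (π s a / πref s a)) ^ 2) := h2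
          _ = ∑ s ∈ filt, G s := by ring
      have hsplitF : ∑ s ∈ filt, F s = F s0 + ∑ s ∈ filt.erase s0, F s :=
        (Finset.add_sum_erase filt F hs0mem).symm
      have hsplitG : ∑ s ∈ filt, G s = G s0 + ∑ s ∈ filt.erase s0, G s :=
        (Finset.add_sum_erase filt G hs0mem).symm
      have hGF : ∑ s ∈ filt.erase s0, G s = ∑ s ∈ filt.erase s0, F s := by
        apply Finset.sum_congr rfl
        intro s hserase
        have hne : s ≠ s0 := Finset.ne_of_mem_erase hserase
        simp only [hG, hF]
        congr 1
        apply Finset.sum_congr rfl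
        intro a _
        have : π s a = πplus s a := by simp only [hπ]; rw [if_neg hne]
        rw [this]
      have hFG0 : F s0 ≤ G s0 := by
        rw [hsplitF, hsplitG, hGF] at H'
        linarith
      have hνS0 := hνS s0 hs0
      have hinner := le_of_mul_le_mul_left (by simpa [hF, hG] using hFG0) hνS0
      have hq0 : ∀ a, π s0 a = q a := by intro a; simp [hπ]
      calc ∑ a, νA s0 a * (c a - Real.log (πplus s0 a / πref s0 a)) ^ 2
          = ∑ a, νA s0 a * ((r s0 a + Vref (f s0 a) - Vref s0) / β
              - Real.log (πplus s0 a / πref s0 a)) ^ 2 := rfl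
        _ ≤ ∑ a, νA s0 a * ((r s0 a + Vref (f s0 a) - Vref s0) / β
              - Real.log (π s0 a / πref s0 a)) ^ 2 := hinner
        _ = ∑ a, νA s0 a * (c a - Real.log (q a / πref s0 a)) ^ 2 := by
            apply Finset.sum_congr rfl
            intro a _
            rw [hq0 a]
    have h0 := keystep c (πref s0) (νA s0) (πplus s0) (hrefpos s0) (hrefsum s0)
      (hνApos s0 hs0) (hpluspos s0) (hplussum s0) hc hopt
    have e3 : β * ∑ a, πplus s0 a * (c a - Real.log (πplus s0 a / πref s0 a))
        = (∑ a, πplus s0 a * (r s0 a + Vref (f s0 a)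
            - β * Real.log (πplus s0 a / πref s0 a))) - Vref s0 := by
      have hsV : Vref s0 = ∑ a, πplus s0 a * Vref s0 := by
        rw [← Finset.sum_mul, hplussum, one_mul]
      rw [Finset.mul_sum]
      conv_rhs => rw [hsV]
      rw [← Finset.sum_sub_distrib]
      apply Finset.sum_congr rfl
      intro a _
      simp only [hcdef]
      field_simp
      ring
    have h4 : 0 ≤ β * ∑ a, πplus s0 a * (c a - Real.log (πplus s0 a / πref s0 a)) :=
      mul_nonneg hβ.le h0
    rw [e3] at h4
    linarith
  -- monotone comparison Vref ≤ Vbeta(πplus)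
  have VB : ∀ n : ℕ, ∀ s, h s ≤ n →
      Vpol f r T h hdec πref s ≤ Vbeta f r T h hdec β πref πplus s := by
    intro n
    induction n with
    | zero =>
      intro s hs
      have hsT : s ∈ T := (hT s).mp (Nat.le_zero.mp hs)
      rw [Vpol, Vbeta, if_pos hsT, if_pos hsT]
    | succ n ih =>
      intro s hs
      by_cases hsT : s ∈ T
      · rw [Vpol, Vbeta, if_pos hsT, if_pos hsT]
      · rw [Vbeta, if_neg hsT]
        calc Vpol f r T h hdec πref s
            ≤ ∑ a, πplus s a * (r s a + Vpol f r T h hdec πref (f s a)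
                - β * Real.log (πplus s a / πref s a)) := keyineq s hsT
          _ ≤ ∑ a, πplus s a * (r s a + Vbeta f r T h hdec β πref πplus (f s a)
                - β * Real.log (πplus s a / πref s a)) := by
              apply Finset.sum_le_sum
              intro a _
              apply mul_le_mul_of_nonneg_left _ (hpluspos s a).le
              have hfa : h (f s a) ≤ n := Nat.lt_succ_iff.mp (lt_of_lt_of_le (hdec s hsT a) hs)
              have := ih (f s a) hfa
              linarith
  -- comparison Vbeta(πplus) ≤ Vpol(πplus)
  have VC : ∀ n : ℕ, ∀ s, h s ≤ n →
      Vbeta f r T h hdec β πref πplus s ≤ Vpol f r T h hdec πplus s := by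
    intro n
    induction n with
    | zero =>
      intro s hs
      have hsT : s ∈ T := (hT s).mp (Nat.le_zero.mp hs)
      rw [Vpol, Vbeta, if_pos hsT, if_pos hsT]
    | succ n ih =>
      intro s hs
      by_cases hsT : s ∈ T
      · rw [Vpol, Vbeta, if_pos hsT, if_pos hsT]
      · rw [Vbeta, Vpol, if_neg hsT, if_neg hsT]
        have hkl : 0 ≤ ∑ a, πplus s a * Real.log (πplus s a / πref s a) :=
          kl_nonneg (πplus s) (πref s) (hpluspos s) (hrefpos s)
            (by rw [hplussum s, hrefsum s])
        calc ∑ a, πplus s a * (r s a + Vbeta f r T h hdec β πref πplus (f s a)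
                - β * Real.log (πplus s a / πref s a))
            ≤ ∑ a, πplus s a * (r s a + Vpol f r T h hdec πplus (f s a)
                - β * Real.log (πplus s a / πref s a)) := by
              apply Finset.sum_le_sum
              intro a _
              apply mul_le_mul_of_nonneg_left _ (hpluspos s a).le
              have hfa : h (f s a) ≤ n := Nat.lt_succ_iff.mp (lt_of_lt_of_le (hdec s hsT a) hs)
              have := ih (f s a) hfa
              linarith
          _ = (∑ a, πplus s a * (r s a + Vpol f r T h hdec πplus (f s a)))
              - β * ∑ a, πplus s a * Real.log (πplus s a / πref s a) := by
              rw [Finset.mul_sum, ← Finset.sum_sub_distrib]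
              apply Finset.sum_congr rfl
              intro a _
              ring
          _ ≤ ∑ a, πplus s a * (r s a + Vpol f r T h hdec πplus (f s a)) := by
              have := mul_nonneg hβ.le hkl
              linarith
  apply Finset.sum_le_sum
  intro s _
  exact mul_le_mul_of_nonneg_left ((VB (h s) s le_rfl).trans (VC (h s) s le_rfl)) (hμ s)
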